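/- Define H : ℝ³ → ℝ by H(ξ) = ‖ξ‖·√(2 + ‖ξ‖²), with gradient ∇H(η) = h'(‖η‖)·η/‖η‖ for η ≠ 0, where h'(r) = 2(1+r²)/√(2+r²). Let ξ, ξ₂ ∈ ℝ³ be nonzero with |⟨ξ, ξ₂⟩| ≤ ½·‖ξ‖·‖ξ₂‖, and suppose ξ₁ := ξ - ξ₂ ≠ 0. Then | ⟨ ξ - (⟨ξ,ξ₂⟩/‖ξ₂‖²)·ξ₂ , ∇H(ξ₁) ⟩ | ≥ (3/4)·‖ξ‖². -/

import Mathlib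

open InnerProductSpace Real

lemma grad_aux (x : EuclideanSpace ℝ (Fin 3)) (hx : x ≠ 0) :
    HasGradientAt (fun y : EuclideanSpace ℝ (Fin 3) => ‖y‖ * Real.sqrt (2 + ‖y‖ ^ 2))
      ((2 * (1 + ‖x‖ ^ 2) / (‖x‖ * Real.sqrt (2 + ‖x‖ ^ 2))) • x) x := by
  have hr : 0 < ‖x‖ := norm_pos_iff.mpr hx
  set r := ‖x‖ with hrdef
  have hφ : HasFDerivAt (fun y : EuclideanSpace ℝ (Fin 3) => (inner ℝ y y : ℝ))
      ((fderivInnerCLM ℝ (x, x)).comp ((ContinuousLinearMap.id ℝ _).prod (ContinuousLinearMap.id ℝ _))) x :=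
    (hasFDerivAt_id x).inner ℝ (hasFDerivAt_id x)
  have hxx : (inner ℝ x x : ℝ) = r ^ 2 := real_inner_self_eq_norm_sq x
  -- outer function g t = √(2t + t²)
  have hu : HasDerivAt (fun t : ℝ => 2 * t + t ^ 2) (2 + 2 * (r ^ 2)) (r ^ 2) := by
    have h1 : HasDerivAt (fun t : ℝ => 2 * t) 2 (r ^ 2) := by
      simpa using (hasDerivAt_id (r ^ 2)).const_mul 2
    have h2 : HasDerivAt (fun t : ℝ => t ^ 2) (2 * r ^ 2) (r ^ 2) := by
      simpa using hasDerivAt_pow 2 (r ^ 2)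
    exact h1.add h2
  have huval : 2 * r ^ 2 + (r ^ 2) ^ 2 ≠ 0 := by positivity
  have hsq : HasDerivAt (fun t : ℝ => Real.sqrt (2 * t + t ^ 2))
      ((2 + 2 * r ^ 2) / (2 * Real.sqrt (2 * r ^ 2 + (r ^ 2) ^ 2))) (r ^ 2) := by
    simpa using hu.sqrt (by simpa using huval)
  rw [← hxx] at hsq
  have hcomp : HasFDerivAt
      (fun y : EuclideanSpace ℝ (Fin 3) => Real.sqrt (2 * (inner ℝ y y : ℝ) + (inner ℝ y y : ℝ) ^ 2))
      (((2 + 2 * (inner ℝ x x : ℝ)) / (2 * Real.sqrt (2 * (inner ℝ x x : ℝ) + (inner ℝ x x : ℝ) ^ 2))) •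
        ((fderivInnerCLM ℝ (x, x)).comp ((ContinuousLinearMap.id ℝ _).prod (ContinuousLinearMap.id ℝ _)))) x :=
    HasDerivAt.comp_hasFDerivAt (f := fun y : EuclideanSpace ℝ (Fin 3) => (inner ℝ y y : ℝ)) x hsq hφ
  -- the two functions agree
  have hfun : (fun y : EuclideanSpace ℝ (Fin 3) => ‖y‖ * Real.sqrt (2 + ‖y‖ ^ 2)) =
      (fun y : EuclideanSpace ℝ (Fin 3) => Real.sqrt (2 * (inner ℝ y y : ℝ) + (inner ℝ y y : ℝ) ^ 2)) := by
    funext y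
    rw [real_inner_self_eq_norm_sq y]
    rw [show (2 : ℝ) * ‖y‖ ^ 2 + (‖y‖ ^ 2) ^ 2 = ‖y‖ ^ 2 * (2 + ‖y‖ ^ 2) by ring,
      Real.sqrt_mul (by positivity), Real.sqrt_sq (norm_nonneg y)]
  rw [hasGradientAt_iff_hasFDerivAt, hfun]
  refine hcomp.congr_fderiv ?_
  ext v
  have h2r : Real.sqrt (2 * r ^ 2 + (r ^ 2) ^ 2) = r * Real.sqrt (2 + r ^ 2) := by
    rw [show (2 : ℝ) * r ^ 2 + (r ^ 2) ^ 2 = r ^ 2 * (2 + r ^ 2) by ring,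
      Real.sqrt_mul (by positivity), Real.sqrt_sq hr.le]
  have hs : 0 < Real.sqrt (2 + r ^ 2) := Real.sqrt_pos.mpr (by positivity)
  simp [toDual_apply_apply, fderivInnerCLM_apply, real_inner_smul_left, real_inner_comm x v, ← hrdef, h2r, hxx]
  field_simp
  ring


/-- For `H(ξ) = ‖ξ‖·√(2 + ‖ξ‖²)` on `ℝ³`: if `ξ, ξ₂ ≠ 0`, `|⟨ξ,ξ₂⟩| ≤ ½‖ξ‖‖ξ₂‖` and
`ξ₁ = ξ - ξ₂ ≠ 0`, then `|⟨ξ - (⟨ξ,ξ₂⟩/‖ξ₂‖²)ξ₂, ∇H(ξ₁)⟩| ≥ (3/4)‖ξ‖²`. -/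
theorem stmt_16 (H : EuclideanSpace ℝ (Fin 3) → ℝ)
    (hH : ∀ ξ : EuclideanSpace ℝ (Fin 3), H ξ = ‖ξ‖ * Real.sqrt (2 + ‖ξ‖ ^ 2))
    (ξ ξ₂ : EuclideanSpace ℝ (Fin 3)) (hξ : ξ ≠ 0) (hξ₂ : ξ₂ ≠ 0)
    (hang : |(inner ℝ ξ ξ₂ : ℝ)| ≤ 1 / 2 * (‖ξ‖ * ‖ξ₂‖)) (hξ₁ : ξ - ξ₂ ≠ 0) :
    3 / 4 * ‖ξ‖ ^ 2 ≤
      |(inner ℝ (ξ - ((inner ℝ ξ ξ₂ : ℝ) / ‖ξ₂‖ ^ 2) • ξ₂) (gradient H (ξ - ξ₂)) : ℝ)| := by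
  have hHfun : H = fun y : EuclideanSpace ℝ (Fin 3) => ‖y‖ * Real.sqrt (2 + ‖y‖ ^ 2) :=
    funext hH
  set η := ξ - ξ₂ with hη
  set r := ‖η‖ with hrdef
  have hr : 0 < r := norm_pos_iff.mpr hξ₁
  set k : ℝ := 2 * (1 + r ^ 2) / (r * Real.sqrt (2 + r ^ 2)) with hk
  have hgrad : gradient H η = k • η := by
    rw [hHfun]; exact (grad_aux η hξ₁).gradient
  set a : ℝ := (inner ℝ ξ ξ₂ : ℝ) with ha
  have hb : (0 : ℝ) < ‖ξ₂‖ ^ 2 := pow_pos (norm_pos_iff.mpr hξ₂) 2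
  have h2r : (0:ℝ) < 2 + r ^ 2 := by nlinarith [sq_nonneg r]
  have hs : 0 < Real.sqrt (2 + r ^ 2) := Real.sqrt_pos.mpr h2r
  have hs2 : Real.sqrt (2 + r ^ 2) ^ 2 = 2 + r ^ 2 := Real.sq_sqrt h2r.le
  have hk1 : 1 ≤ k := by
    rw [hk, le_div_iff₀ (by positivity)]
    nlinarith [sq_nonneg (r - Real.sqrt (2 + r ^ 2))]
  have hinner : (inner ℝ (ξ - (a / ‖ξ₂‖ ^ 2) • ξ₂) (gradient H η) : ℝ) =
      k * (‖ξ‖ ^ 2 - a ^ 2 / ‖ξ₂‖ ^ 2) := by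
    have hcm : (inner ℝ ξ₂ ξ : ℝ) = a := by rw [ha]; exact (real_inner_comm ξ₂ ξ).symm
    rw [hgrad, hη, real_inner_smul_right, inner_sub_left, inner_sub_right, inner_sub_right,
      real_inner_smul_left, real_inner_smul_left, real_inner_self_eq_norm_sq,
      real_inner_self_eq_norm_sq, hcm, ← ha]
    congr 1
    field_simp
    ring
  have ha2 : a ^ 2 ≤ 1 / 4 * (‖ξ‖ ^ 2 * ‖ξ₂‖ ^ 2) := by
    have := abs_nonneg a
    nlinarith [sq_abs a, mul_self_le_mul_self this hang]
  have hT : 3 / 4 * ‖ξ‖ ^ 2 ≤ ‖ξ‖ ^ 2 - a ^ 2 / ‖ξ₂‖ ^ 2 := by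
    have hd : a ^ 2 / ‖ξ₂‖ ^ 2 ≤ 1 / 4 * ‖ξ‖ ^ 2 := by
      rw [div_le_iff₀ hb]; nlinarith
    linarith
  have hT0 : 0 ≤ ‖ξ‖ ^ 2 - a ^ 2 / ‖ξ₂‖ ^ 2 := le_trans (by positivity) hT
  have hmul : ‖ξ‖ ^ 2 - a ^ 2 / ‖ξ₂‖ ^ 2 ≤ k * (‖ξ‖ ^ 2 - a ^ 2 / ‖ξ₂‖ ^ 2) :=
    le_mul_of_one_le_left hT0 hk1
  rw [hinner, abs_of_nonneg (mul_nonneg (by linarith) hT0)]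
  linarith
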